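/- If ⌊m/2⌋ ≤ k₂ < m, then the number of functions f : Fin n → ℕ with ∑ f i = m and f i ≤ k₂ for all i equals C(m+n-1, n-1) - n · C(m - k₂ + n - 2, n-1). -/

import Mathlib

lemma card_fixed_sum (n m : ℕ) (hn : 1 ≤ n) :
    Nat.card {f : Fin n → ℕ // ∑ i, f i = m} = (m + n - 1).choose (n - 1) := by
  rw [Nat.card_congr (Sym.equivNatSumOfFintype (Fin n) m).symm, Nat.card_eq_fintype_card,
    Sym.card_sym_eq_choose, Fintype.card_fin]
  have h := Nat.choose_symm (show m ≤ m + n - 1 by omega)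
  rw [show m + n - 1 - m = n - 1 by omega] at h
  rw [show n + m - 1 = m + n - 1 by omega, ← h]

theorem stmt_4 (m n k₂ : ℕ) (hm : 1 ≤ m) (hn : 1 ≤ n)
    (h1 : m / 2 ≤ k₂) (h2 : k₂ < m) :
    ({f : Fin n → ℕ | (∑ i, f i = m) ∧ ∀ i, f i ≤ k₂}.ncard : ℤ)
      = (m + n - 1).choose (n - 1) - n * (m - k₂ + n - 2).choose (n - 1) := by
  classical
  set m' := m - (k₂ + 1) with hm'
  set A : Set (Fin n → ℕ) := {f | ∑ i, f i = m} with hA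
  set G : Set (Fin n → ℕ) := {f | (∑ i, f i = m) ∧ ∀ i, f i ≤ k₂} with hG
  set Bad : Set (Fin n → ℕ) := {f | (∑ i, f i = m) ∧ ∃ i, k₂ < f i} with hBad
  haveI : Finite {f : Fin n → ℕ // ∑ i, f i = m} :=
    Finite.of_equiv _ (Sym.equivNatSumOfFintype (Fin n) m)
  have hAfin : A.Finite := Set.finite_coe_iff.mp (by exact this)
  have hGfin : G.Finite := hAfin.subset (fun f hf => hf.1)
  have hBfin : Bad.Finite := hAfin.subset (fun f hf => hf.1)
  have hunion : G ∪ Bad = A := by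
    ext f
    simp only [hA, hG, hBad, Set.mem_union, Set.mem_setOf_eq]
    constructor
    · rintro (⟨h, _⟩ | ⟨h, _⟩) <;> exact h
    · intro h
      by_cases hcase : ∀ i, f i ≤ k₂
      · exact Or.inl ⟨h, hcase⟩
      · push_neg at hcase
        exact Or.inr ⟨h, hcase⟩
  have hdisj : Disjoint G Bad := by
    rw [Set.disjoint_left]
    rintro f ⟨_, hle⟩ ⟨_, i, hi⟩
    exact absurd (hle i) (not_le.mpr hi)
  have hcardA : A.ncard = (m + n - 1).choose (n - 1) := by
    rw [← Nat.card_coe_set_eq]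
    exact card_fixed_sum n m hn
  -- pairwise bound
  have pair : ∀ (f : Fin n → ℕ), (∑ i, f i) = m → ∀ i j : Fin n, i ≠ j → f i + f j ≤ m := by
    intro f hf i j hij
    have hsub : ({i, j} : Finset (Fin n)) ⊆ Finset.univ := Finset.subset_univ _
    have := Finset.sum_le_sum_of_subset hsub (f := f)
    rwa [Finset.sum_pair hij, hf] at this
  -- the equiv for Bad
  have φsum : ∀ (i : Fin n) (g : Fin n → ℕ), (∑ j, g j) = m' →
      (∑ j, (g j + if j = i then k₂ + 1 else 0)) = m := by
    intro i g hg
    rw [Finset.sum_add_distrib, hg, Finset.sum_ite_eq' Finset.univ i (fun _ => k₂ + 1)]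
    simp only [Finset.mem_univ, if_true]
    omega
  let φ : (Fin n × {g : Fin n → ℕ // ∑ j, g j = m'}) → ↥Bad := fun p =>
    ⟨fun j => p.2.1 j + if j = p.1 then k₂ + 1 else 0,
      ⟨φsum p.1 p.2.1 p.2.2, ⟨p.1, by simp; omega⟩⟩⟩
  have hφbij : Function.Bijective φ := by
    constructor
    · rintro ⟨i, g, hg⟩ ⟨i', g', hg'⟩ h
      have hfun := congrArg Subtype.val h
      simp only [φ] at hfun
      by_cases hii : i = i'
      · subst hii
        refine Prod.ext rfl (Subtype.ext (funext fun j => show g j = g' j from ?_))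
        have := congrFun hfun j
        rcases eq_or_ne j i with rfl | hji
        · simpa using this
        · simpa [hji] using this
      · exfalso
        have hf : (∑ j, (g j + if j = i then k₂ + 1 else 0)) = m := φsum i g hg
        have hp := pair _ hf i i' hii
        have e1 := congrFun hfun i'
        have hne : i' ≠ i := fun hc => hii hc.symm
        simp only [if_pos rfl] at e1 hp
        simp [hne] at e1 hp
        omega
    · rintro ⟨f, hf, i, hi⟩
      have hbound : ∀ j, (if j = i then k₂ + 1 else 0) ≤ f j := by
        intro j; split
        · next h => subst h; omega
        · omega
      refine ⟨⟨i, fun j => f j - if j = i then k₂ + 1 else 0, ?_⟩, ?_⟩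
      · rw [Finset.sum_tsub_distrib _ (fun j _ => hbound j), hf,
          Finset.sum_ite_eq' Finset.univ i (fun _ => k₂ + 1)]
        simp
        exact hm'.symm
      · refine Subtype.ext (funext fun j => ?_)
        have := hbound j
        dsimp [φ]
        omega
  have hcardBad : Bad.ncard = n * (m' + n - 1).choose (n - 1) := by
    rw [← Nat.card_coe_set_eq, ← Nat.card_congr (Equiv.ofBijective φ hφbij),
      Nat.card_prod, Nat.card_eq_fintype_card, Fintype.card_fin, card_fixed_sum n m' hn]
  have hsum : G.ncard + Bad.ncard = A.ncard := by
    rw [← hunion, Set.ncard_union_eq hdisj hGfin hBfin]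
  -- bring it together
  have key : (G.ncard : ℤ) = (A.ncard : ℤ) - (Bad.ncard : ℤ) := by omega
  rw [hcardA, hcardBad] at key
  push_cast at key
  rw [show m' + n - 1 = m - k₂ + n - 2 by omega] at key
  exact key
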